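/- For any v ∈ ℝⁿ with n ≥ 1, the function φ(ν) = Σᵢ max(vᵢ − ν, 0) is continuous and nonincreasing in ν, and there exists ν⋆ ∈ [−maxᵢ|vᵢ| − 1, maxᵢ|vᵢ|] with φ(ν⋆) = 1. -/
import Mathlib


/-- `phi ν = ∑ max (v i - ν) 0` is continuous and nonincreasing, and attains the value 1
at some point of `[-maxᵢ|vᵢ| - 1, maxᵢ|vᵢ|]`. -/
theorem simplex_dual_root (n : ℕ) (hn : 0 < n) (v : Fin n → ℝ)
    (phi : ℝ → ℝ) (hphi : ∀ nu, phi nu = ∑ i, max (v i - nu) 0) :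
    Continuous phi ∧ Antitone phi ∧
    ∃ nuStar ∈ Set.Icc
        (-(Finset.univ.sup' (Finset.univ_nonempty_iff.mpr ⟨⟨0, hn⟩⟩) fun i => |v i|) - 1)
        (Finset.univ.sup' (Finset.univ_nonempty_iff.mpr ⟨⟨0, hn⟩⟩) fun i => |v i|),
      phi nuStar = 1 := by
  have hfun : phi = fun nu => ∑ i, max (v i - nu) 0 := funext hphi
  set M := Finset.univ.sup' (Finset.univ_nonempty_iff.mpr ⟨⟨0, hn⟩⟩) fun i => |v i| with hM
  have hcont : Continuous phi := by
    rw [hfun]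
    exact continuous_finset_sum _ fun i _ =>
      (continuous_const.sub continuous_id).max continuous_const
  have hanti : Antitone phi := by
    intro a b hab
    rw [hphi, hphi]
    exact Finset.sum_le_sum fun i _ =>
      max_le_max (by linarith) le_rfl
  refine ⟨hcont, hanti, ?_⟩
  have hle : ∀ i, |v i| ≤ M := fun i => Finset.le_sup' (fun j => |v j|) (Finset.mem_univ i)
  have hab : -M - 1 ≤ M := by
    have := hle ⟨0, hn⟩
    have := abs_nonneg (v ⟨0, hn⟩)
    linarith
  have h1 : phi M = 0 := by
    rw [hphi]
    apply Finset.sum_eq_zero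
    intro i _
    have := hle i
    have := abs_le.mp this
    exact max_eq_right (by linarith [this.2])
  have h2 : (1 : ℝ) ≤ phi (-M - 1) := by
    rw [hphi]
    have : ∀ i ∈ Finset.univ, (1 : ℝ) ≤ max (v i - (-M - 1)) 0 := by
      intro i _
      have := (abs_le.mp (hle i)).1
      rw [max_eq_left (by linarith)]
      linarith
    calc (1 : ℝ) = ∑ _i : Fin n, (1 : ℝ) / n := by
          rw [Finset.sum_const, Finset.card_univ, Fintype.card_fin, nsmul_eq_mul]
          field_simp
      _ ≤ ∑ i, max (v i - (-M - 1)) 0 := by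
          apply Finset.sum_le_sum
          intro i hi
          have hn1 : (1:ℝ) ≤ n := by exact_mod_cast hn
          have := this i hi
          calc (1:ℝ)/n ≤ 1 := by
                rw [div_le_one (by linarith)]; exact hn1
            _ ≤ _ := this
  have := intermediate_value_Icc' hab hcont.continuousOn
  have hmem : (1 : ℝ) ∈ Set.Icc (phi M) (phi (-M - 1)) := ⟨by rw [h1]; norm_num, h2⟩
  obtain ⟨x, hx, hx1⟩ := this hmem
  exact ⟨x, hx, hx1⟩
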